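/- The following are equivalent: (1) for every n ∈ ℕ*, every symmetric log-concave measure μ on ℝ^n and every symmetric convex set A ⊂ ℝ^n, the function t ↦ μ(e^t A) is log-concave on ℝ; (2) for every n ∈ ℕ* and all even log-concave functions f, g : ℝ^n → ℝ_+, the function t ↦ ∫_{ℝ^n} f(e^{-t}x)g(x)dx is log-concave on ℝ. -/

import Mathlib

open Real MeasureTheory Set Pointwise

/-- A measure satisfies the (B)-property if `t ↦ ν(eᵗA)` is log-concave on `ℝ`
for every symmetric convex set `A`. -/
noncomputable def BProperty {E : Type*} [NormedAddCommGroup E] [NormedSpace ℝ E]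
    [MeasurableSpace E] (ν : Measure E) : Prop :=
  ∀ A : Set E, Convex ℝ A → (∀ x ∈ A, -x ∈ A) →
    ∀ s t : ℝ, ∀ l ∈ Set.Icc (0 : ℝ) 1,
      (ν (Real.exp s • A)).toReal ^ (1 - l) * (ν (Real.exp t • A)).toReal ^ l ≤
        (ν (Real.exp ((1 - l) * s + l * t) • A)).toReal

/-- A nonnegative function is log-concave if it satisfies the multiplicative
concavity inequality; `Even` means invariance under `x ↦ -x`. -/
def IsEvenLogConcave {E : Type*} [AddCommGroup E] [Module ℝ E] (f : E → ℝ) : Prop :=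
  (∀ x, 0 ≤ f x) ∧ (∀ x, f (-x) = f x) ∧
    ∀ x y : E, ∀ l ∈ Set.Icc (0 : ℝ) 1,
      f x ^ (1 - l) * f y ^ l ≤ f ((1 - l) • x + l • y)

open scoped ENNReal


variable {N : ℕ}

lemma elc_convex_preimage {f : (Fin N → ℝ) → ℝ} (hf : IsEvenLogConcave f) {c : ℝ}
    (hc : 0 ≤ c) : Convex ℝ (f ⁻¹' Ioi c) := by
  intro x hx y hy a b ha hb hab
  simp only [mem_preimage, mem_Ioi] at *
  set μ := min (f x) (f y) with hμ
  have hcμ : c < μ := lt_min hx hy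
  have hμpos : 0 < μ := lt_of_le_of_lt hc hcμ
  have key := hf.2.2 x y b ⟨hb, by linarith⟩
  have h1b : 1 - b = a := by linarith
  rw [h1b] at key
  calc c < μ := hcμ
    _ = μ ^ a * μ ^ b := by
        rw [← Real.rpow_add hμpos, hab, Real.rpow_one]
    _ ≤ f x ^ a * f y ^ b := by
        have h1 : μ ^ a ≤ f x ^ a := Real.rpow_le_rpow hμpos.le (min_le_left _ _) ha
        have h2 : μ ^ b ≤ f y ^ b := Real.rpow_le_rpow hμpos.le (min_le_right _ _) hb
        exact mul_le_mul h1 h2 (Real.rpow_nonneg hμpos.le _) (Real.rpow_nonneg (le_trans hμpos.le (min_le_left _ _)) _)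
    _ ≤ f (a • x + b • y) := key

lemma elc_aemeasurable {f : (Fin N → ℝ) → ℝ} (hf : IsEvenLogConcave f) :
    AEMeasurable f (volume : Measure (Fin N → ℝ)) := by
  have hnm : NullMeasurable f (volume : Measure (Fin N → ℝ)) := by
    refine measurable_of_Ioi (α := ℝ) (δ := NullMeasurableSpace (Fin N → ℝ) volume) (f := f) ?_
    intro c
    rcases lt_or_ge c 0 with hc | hc
    · have : f ⁻¹' Ioi c = univ := by
        ext x; simp only [mem_preimage, mem_Ioi, mem_univ, iff_true]
        exact lt_of_lt_of_le hc (hf.1 x)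
      rw [show (f ⁻¹' Ioi c : Set (NullMeasurableSpace (Fin N → ℝ) volume)) = univ from this]; exact MeasurableSet.univ
    · exact (elc_convex_preimage hf hc).nullMeasurableSet _
  exact hnm.aemeasurable

lemma elc_smul_le {f : (Fin N → ℝ) → ℝ} (hf : IsEvenLogConcave f) {a b : ℝ}
    (ha : 0 < a) (hab : a ≤ b) (x : Fin N → ℝ) : f (b • x) ≤ f (a • x) := by
  have hb : 0 < b := lt_of_lt_of_le ha hab
  set l := (a + b) / (2 * b) with hl
  have hl0 : 0 ≤ l := by positivity
  have hl1 : l ≤ 1 := by rw [hl, div_le_one (by positivity)]; linarith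
  have key := hf.2.2 (-(b • x)) (b • x) l ⟨hl0, hl1⟩
  have hcomb : (1 - l) • (-(b • x)) + l • (b • x) = a • x := by
    rw [smul_neg, smul_smul, smul_smul, ← neg_smul, ← add_smul]
    congr 1
    field_simp [hl]
    have h2 : b * l * 2 = a + b := by rw [hl]; field_simp
    linarith
  rw [hcomb, hf.2.1] at key
  rcases eq_or_lt_of_le (hf.1 (b • x)) with h0 | hpos
  · rw [← h0]; exact hf.1 _
  · calc f (b • x) = f (b • x) ^ (1 - l) * f (b • x) ^ l := by
          rw [← Real.rpow_add hpos]; simp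
      _ ≤ f (a • x) := key

lemma elc_indicator {A : Set (Fin N → ℝ)} (hconv : Convex ℝ A) (hsym : ∀ x ∈ A, -x ∈ A) :
    IsEvenLogConcave (A.indicator (fun _ => (1 : ℝ))) := by
  have hmemneg : ∀ x, -x ∈ A ↔ x ∈ A := fun x =>
    ⟨fun h => by simpa using hsym _ h, hsym x⟩
  refine ⟨fun x => indicator_nonneg (by simp) x, fun x => ?_, fun x y l ⟨hl0, hl1⟩ => ?_⟩
  · by_cases hx : x ∈ A
    · rw [indicator_of_mem hx, indicator_of_mem ((hmemneg x).2 hx)]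
    · rw [indicator_of_notMem hx, indicator_of_notMem (fun h => hx ((hmemneg x).1 h))]
  · by_cases hx : x ∈ A
    · by_cases hy : y ∈ A
      · have hc : (1 - l) • x + l • y ∈ A := hconv hx hy (by linarith) hl0 (by ring)
        rw [indicator_of_mem hx, indicator_of_mem hy, indicator_of_mem hc]
        simp [Real.one_rpow]
      · rcases eq_or_ne l 0 with rfl | hl
        · simp only [sub_zero, Real.rpow_one, Real.rpow_zero, mul_one, one_smul, zero_smul,
            add_zero, le_refl]
        · rw [indicator_of_notMem hy, Real.zero_rpow hl, mul_zero]
          exact indicator_nonneg (by simp) _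
    · rcases eq_or_ne l 1 with rfl | hl
      · simp only [sub_self, zero_smul, one_smul, zero_add, Real.rpow_zero, Real.rpow_one,
          one_mul, le_refl]
      · rw [indicator_of_notMem hx, Real.zero_rpow (sub_ne_zero.2 (Ne.symm hl)), zero_mul]
        exact indicator_nonneg (by simp) _

lemma indicator_integral_repr {h : (Fin N → ℝ) → ℝ} (hh : IsEvenLogConcave h)
    {A : Set (Fin N → ℝ)} (hconv : Convex ℝ A) (u : ℝ) :
    ∫ x, A.indicator (fun _ => (1 : ℝ)) (Real.exp (-u) • x) * h x =
      ((volume.withDensity fun x => ENNReal.ofReal (h x)) (Real.exp u • A)).toReal := by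
  have hS : Convex ℝ (Real.exp u • A) := hconv.smul _
  have hSnm : NullMeasurableSet (Real.exp u • A) volume := hS.nullMeasurableSet _
  have hmem : ∀ x : Fin N → ℝ, Real.exp (-u) • x ∈ A ↔ x ∈ Real.exp u • A := fun x => by
    rw [mem_smul_set_iff_inv_smul_mem₀ (Real.exp_ne_zero u), ← Real.exp_neg]
  have hpt : ∀ x, A.indicator (fun _ => (1 : ℝ)) (Real.exp (-u) • x) * h x =
      (Real.exp u • A).indicator h x := by
    intro x
    by_cases hx : x ∈ Real.exp u • A
    · rw [indicator_of_mem ((hmem x).2 hx), indicator_of_mem hx, one_mul]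
    · rw [indicator_of_notMem (fun hc => hx ((hmem x).1 hc)), indicator_of_notMem hx, zero_mul]
  simp_rw [hpt]
  rw [integral_eq_lintegral_of_nonneg_ae
      (Filter.Eventually.of_forall fun x => indicator_nonneg (fun y _ => hh.1 y) x)
      ((elc_aemeasurable hh).indicator₀ hSnm).aestronglyMeasurable]
  congr 1
  have : ∀ x, ENNReal.ofReal ((Real.exp u • A).indicator h x) =
      (Real.exp u • A).indicator (fun x => ENNReal.ofReal (h x)) x := by
    intro x
    by_cases hx : x ∈ Real.exp u • A
    · rw [indicator_of_mem hx, indicator_of_mem hx]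
    · rw [indicator_of_notMem hx, indicator_of_notMem hx, ENNReal.ofReal_zero]
  simp_rw [this]
  rw [lintegral_indicator₀ hSnm, withDensity_apply']

noncomputable def gApprox (p : ℕ) (g : (Fin N → ℝ) → ℝ) (x : Fin N → ℝ) : ℝ :=
  if 0 < g x then (max (1 + Real.log (g x) / (p + 1)) 0) ^ (p + 1) else 0

lemma gApprox_nonneg (p : ℕ) (g : (Fin N → ℝ) → ℝ) (x : Fin N → ℝ) :
    0 ≤ gApprox p g x := by
  unfold gApprox; split
  · positivity
  · exact le_rfl

lemma gApprox_le (p : ℕ) (g : (Fin N → ℝ) → ℝ) (x : Fin N → ℝ) (hgx : 0 ≤ g x) :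
    gApprox p g x ≤ g x := by
  unfold gApprox; split
  · rename_i h
    rcases le_or_gt (1 + Real.log (g x) / (p + 1)) 0 with h0 | h0
    · rw [max_eq_right h0, zero_pow (Nat.succ_ne_zero p)]; exact hgx
    · rw [max_eq_left h0.le]
      have hb : 1 + Real.log (g x) / (p + 1) ≤ Real.exp (Real.log (g x) / (p + 1)) := by
        linarith [Real.add_one_le_exp (Real.log (g x) / (p + 1))]
      calc (1 + Real.log (g x) / (p + 1)) ^ (p + 1)
          ≤ Real.exp (Real.log (g x) / (p + 1)) ^ (p + 1) :=
            pow_le_pow_left₀ h0.le hb _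
        _ = Real.exp (Real.log (g x)) := by
            rw [← Real.exp_nat_mul]
            congr 1
            field_simp
            push_cast
            ring
        _ = g x := Real.exp_log h
  · exact hgx

lemma gApprox_mono (g : (Fin N → ℝ) → ℝ) (x : Fin N → ℝ) :
    Monotone fun p => gApprox p g x := by
  apply monotone_nat_of_le_succ
  intro p
  unfold gApprox
  split
  · rename_i h
    set a := Real.log (g x) with ha
    set q : ℝ := (p : ℝ) + 1 with hq
    have hq0 : (0 : ℝ) < q := by positivity
    have hq1 : (0 : ℝ) < q + 1 := by positivity
    rcases le_or_gt (1 + a / q) 0 with h0 | h0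
    · rw [max_eq_right h0, zero_pow (Nat.succ_ne_zero p)]
      positivity
    · set b := 1 + a / q with hb
      have key : b ^ (q / (q + 1)) * 1 ^ ((1:ℝ) / (q + 1)) ≤
          q / (q + 1) * b + 1 / (q + 1) * 1 :=
        Real.geom_mean_le_arith_mean2_weighted (by positivity) (by positivity) h0.le
          zero_le_one (by field_simp)
      have hrhs : q / (q + 1) * b + 1 / (q + 1) * 1 = 1 + a / (q + 1) := by
        rw [hb]; field_simp; ring
      rw [Real.one_rpow, mul_one, hrhs] at key
      have hpos : (0:ℝ) ≤ 1 + a / (q + 1) := le_trans (Real.rpow_nonneg h0.le _) key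
      rw [max_eq_left h0.le]
      have cast1 : ((p : ℝ) + 1 + 1) = q + 1 := by rw [hq]
      have : b ^ (p + 1) = (b ^ (q / (q + 1))) ^ (p + 1 + 1) := by
        rw [← Real.rpow_natCast (b ^ (q / (q + 1))) (p + 1 + 1), ← Real.rpow_mul h0.le,
          ← Real.rpow_natCast b (p + 1)]
        congr 1
        have hcast : ((p + 1 + 1 : ℕ) : ℝ) = q + 1 := by push_cast [hq]; ring
        have hcast2 : ((p + 1 : ℕ) : ℝ) = q := by push_cast [hq]; ring
        rw [hcast, hcast2, div_mul_cancel₀ _ (ne_of_gt hq1)]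
      rw [this]
      calc (b ^ (q / (q + 1))) ^ (p + 1 + 1) ≤ (1 + a / (q + 1)) ^ (p + 1 + 1) :=
            pow_le_pow_left₀ (Real.rpow_nonneg h0.le _) key _
        _ = (max (1 + a / (((p:ℕ) + 1 : ℕ) + 1 : ℝ)) 0) ^ (p + 1 + 1) := by
            have hc : (((p:ℕ) + 1 : ℕ) + 1 : ℝ) = q + 1 := by push_cast [hq]; ring
            rw [hc, max_eq_left hpos]
  · exact le_rfl

lemma gApprox_tendsto (g : (Fin N → ℝ) → ℝ) (x : Fin N → ℝ) (hgx : 0 ≤ g x) :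
    Filter.Tendsto (fun p => gApprox p g x) Filter.atTop (nhds (g x)) := by
  unfold gApprox
  by_cases h : 0 < g x
  · simp only [if_pos h]
    set a := Real.log (g x) with ha
    have h₁ : Filter.Tendsto (fun p : ℕ => (1 + a / ((p:ℝ) + 1)) ^ (p + 1))
        Filter.atTop (nhds (g x)) := by
      have := (Real.tendsto_one_add_div_pow_exp a).comp (Filter.tendsto_add_atTop_nat 1)
      rw [Real.exp_log h] at this
      refine this.congr fun p => ?_
      simp only [Function.comp_apply]
      push_cast
      ring_nf
    refine h₁.congr' ?_
    filter_upwards [Filter.eventually_ge_atTop ⌈|a|⌉₊] with p hp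
    have habs : |a| ≤ (p : ℝ) + 1 := by
      calc |a| ≤ (⌈|a|⌉₊ : ℝ) := Nat.le_ceil _
        _ ≤ (p : ℝ) := by exact_mod_cast hp
        _ ≤ (p : ℝ) + 1 := by linarith
    have : 0 ≤ 1 + a / ((p:ℝ) + 1) := by
      have h1 : -((p:ℝ) + 1) ≤ a := by
        have := abs_le.1 habs; linarith [this.1]
      have h2 : (-1 : ℝ) ≤ a / ((p:ℝ)+1) := by
        rw [le_div_iff₀ (by positivity)]
        linarith
      linarith
    rw [max_eq_left this]
  · simp only [if_neg h]
    have : g x = 0 := le_antisymm (not_lt.1 h) hgx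
    rw [this]
    exact tendsto_const_nhds

lemma gApprox_aemeasurable {g : (Fin N → ℝ) → ℝ} (hg : AEMeasurable g (volume : Measure (Fin N → ℝ)))
    (p : ℕ) : AEMeasurable (gApprox p g) (volume : Measure (Fin N → ℝ)) := by
  unfold gApprox
  have h1 : AEMeasurable (fun x => (max (1 + Real.log (g x) / (p + 1)) 0) ^ (p + 1))
      (volume : Measure (Fin N → ℝ)) := by
    apply AEMeasurable.pow_const
    exact ((aemeasurable_const.add ((Real.measurable_log.comp_aemeasurable hg).div_const _)).max
      aemeasurable_const)
  have hs : NullMeasurableSet {x : Fin N → ℝ | 0 < g x} volume :=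
    hg.nullMeasurable measurableSet_Ioi
  have heq : (fun x => if 0 < g x then (max (1 + Real.log (g x) / (p + 1)) 0) ^ (p + 1)
      else 0) = {x : Fin N → ℝ | 0 < g x}.indicator
        (fun x => (max (1 + Real.log (g x) / (p + 1)) 0) ^ (p + 1)) := by
    funext x
    by_cases hx : 0 < g x
    · rw [if_pos hx, Set.indicator_of_mem (by exact hx)]
    · rw [if_neg hx, Set.indicator_of_notMem (by exact hx)]
  rw [heq]
  exact h1.indicator₀ hs

section BigSpace
variable {n : ℕ}

def projFst {q : ℕ} (z : Fin (n + q) → ℝ) : Fin n → ℝ := fun i => z (Fin.castAdd q i)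

lemma projFst_add {q : ℕ} (z w : Fin (n + q) → ℝ) : projFst (z + w) = projFst z + projFst w := rfl
lemma projFst_smul {q : ℕ} (c : ℝ) (z : Fin (n + q) → ℝ) : projFst (c • z) = c • projFst z := rfl
lemma projFst_neg {q : ℕ} (z : Fin (n + q) → ℝ) : projFst (-z) = -projFst z := rfl

/-- The convex body in `ℝ^{n+q}` whose `x`-fibers are cubes of side `2(1 + log g x / q)`. -/
def KSet (n q : ℕ) (g : (Fin n → ℝ) → ℝ) : Set (Fin (n + q) → ℝ) :=
  {z | 0 < g (projFst z) ∧
    ∀ j : Fin q, |z (Fin.natAdd n j)| ≤ 1 + Real.log (g (projFst z)) / q}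

lemma elc_log_concave {g : (Fin n → ℝ) → ℝ} (hg : IsEvenLogConcave g) {x y : Fin n → ℝ}
    (hx : 0 < g x) (hy : 0 < g y) {a b : ℝ} (ha : 0 ≤ a) (hb : 0 ≤ b) (hab : a + b = 1) :
    a * Real.log (g x) + b * Real.log (g y) ≤ Real.log (g (a • x + b • y)) := by
  have key := hg.2.2 x y b ⟨hb, by linarith⟩
  have h1b : 1 - b = a := by linarith
  rw [h1b] at key
  have hpos : 0 < g x ^ a * g y ^ b :=
    mul_pos (Real.rpow_pos_of_pos hx _) (Real.rpow_pos_of_pos hy _)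
  calc a * Real.log (g x) + b * Real.log (g y)
      = Real.log (g x ^ a * g y ^ b) := by
        rw [Real.log_mul (ne_of_gt (Real.rpow_pos_of_pos hx _))
          (ne_of_gt (Real.rpow_pos_of_pos hy _)), Real.log_rpow hx, Real.log_rpow hy]
    _ ≤ Real.log (g (a • x + b • y)) := Real.log_le_log hpos key

lemma KSet_convex {q : ℕ} {g : (Fin n → ℝ) → ℝ} (hg : IsEvenLogConcave g) :
    Convex ℝ (KSet n q g) := by
  intro z hz w hw a b ha hb hab
  obtain ⟨hz0, hzj⟩ := hz
  obtain ⟨hw0, hwj⟩ := hw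
  have hproj : projFst (a • z + b • w) = a • projFst z + b • projFst w := rfl
  have hlog := elc_log_concave hg hz0 hw0 ha hb hab
  have hg0 : 0 < g (projFst (a • z + b • w)) := by
    rw [hproj]
    have key := hg.2.2 (projFst z) (projFst w) b ⟨hb, by linarith⟩
    have h1b : 1 - b = a := by linarith
    rw [h1b] at key
    exact lt_of_lt_of_le
      (mul_pos (Real.rpow_pos_of_pos hz0 _) (Real.rpow_pos_of_pos hw0 _)) key
  refine ⟨hg0, fun j => ?_⟩
  have hq : (0 : ℝ) < q := by exact_mod_cast j.pos
  have hcoord : (a • z + b • w) (Fin.natAdd n j) = a * z (Fin.natAdd n j) + b * w (Fin.natAdd n j) := rfl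
  rw [hcoord, hproj]
  calc |a * z (Fin.natAdd n j) + b * w (Fin.natAdd n j)|
      ≤ a * |z (Fin.natAdd n j)| + b * |w (Fin.natAdd n j)| := by
        refine le_trans (abs_add_le _ _) ?_
        rw [abs_mul, abs_mul, abs_of_nonneg ha, abs_of_nonneg hb]
    _ ≤ a * (1 + Real.log (g (projFst z)) / q) + b * (1 + Real.log (g (projFst w)) / q) := by
        gcongr
        · exact hzj j
        · exact hwj j
    _ = 1 + (a * Real.log (g (projFst z)) + b * Real.log (g (projFst w))) / q := by
        field_simp
        linear_combination (q : ℝ) * hab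
    _ ≤ 1 + Real.log (g (a • projFst z + b • projFst w)) / q := by
        exact (add_le_add_iff_left 1).2 ((div_le_div_iff_of_pos_right hq).2 hlog)

lemma KSet_symm {q : ℕ} {g : (Fin n → ℝ) → ℝ} (hg : IsEvenLogConcave g) :
    ∀ z ∈ KSet n q g, -z ∈ KSet n q g := by
  intro z hz
  obtain ⟨hz0, hzj⟩ := hz
  have hproj : g (projFst (-z)) = g (projFst z) := by rw [projFst_neg, hg.2.1]
  refine ⟨by rw [hproj]; exact hz0, fun j => ?_⟩
  have : (-z) (Fin.natAdd n j) = -(z (Fin.natAdd n j)) := rfl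
  rw [this, abs_neg, hproj]
  exact hzj j

noncomputable def splitEquiv (n q : ℕ) : ((Fin n → ℝ) × (Fin q → ℝ)) ≃ᵐ (Fin (n + q) → ℝ) :=
  (MeasurableEquiv.sumPiEquivProdPi (fun _ : Fin n ⊕ Fin q => ℝ)).symm.trans
    (MeasurableEquiv.piCongrLeft (fun _ : Fin (n + q) => ℝ) finSumFinEquiv)

lemma splitEquiv_measurePreserving (n q : ℕ) :
    MeasurePreserving (splitEquiv n q) volume volume :=
  (volume_measurePreserving_piCongrLeft (fun _ : Fin (n + q) => ℝ) finSumFinEquiv).comp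
    (volume_measurePreserving_sumPiEquivProdPi_symm (fun _ : Fin n ⊕ Fin q => ℝ))

lemma splitEquiv_castAdd {q : ℕ} (x : Fin n → ℝ) (y : Fin q → ℝ) (i : Fin n) :
    splitEquiv n q (x, y) (Fin.castAdd q i) = x i := by
  have := Equiv.piCongrLeft_sumInl (fun _ : Fin (n + q) => ℝ) finSumFinEquiv x y i
  rw [finSumFinEquiv_apply_left] at this
  exact this

lemma splitEquiv_natAdd {q : ℕ} (x : Fin n → ℝ) (y : Fin q → ℝ) (j : Fin q) :
    splitEquiv n q (x, y) (Fin.natAdd n j) = y j := by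
  have := Equiv.piCongrLeft_sumInr (fun _ : Fin (n + q) => ℝ) finSumFinEquiv x y j
  rw [finSumFinEquiv_apply_right] at this
  exact this

lemma projFst_splitEquiv {q : ℕ} (x : Fin n → ℝ) (y : Fin q → ℝ) :
    projFst (splitEquiv n q (x, y)) = x := by
  funext i
  exact splitEquiv_castAdd x y i

lemma mem_KSet_split {q : ℕ} {g : (Fin n → ℝ) → ℝ} (x : Fin n → ℝ) (y : Fin q → ℝ) :
    splitEquiv n q (x, y) ∈ KSet n q g ↔
      (0 < g x ∧ ∀ j : Fin q, |y j| ≤ 1 + Real.log (g x) / q) := by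
  unfold KSet
  simp only [mem_setOf_eq, projFst_splitEquiv]
  constructor
  · rintro ⟨h1, h2⟩
    exact ⟨h1, fun j => by have := h2 j; rwa [splitEquiv_natAdd] at this⟩
  · rintro ⟨h1, h2⟩
    exact ⟨h1, fun j => by rw [splitEquiv_natAdd]; exact h2 j⟩

end BigSpace

noncomputable def gApproxQ {n : ℕ} (q : ℕ) (g : (Fin n → ℝ) → ℝ) (x : Fin n → ℝ) : ℝ :=
  if 0 < g x then (max (1 + Real.log (g x) / q) 0) ^ q else 0

lemma gApprox_eq_gApproxQ {n : ℕ} (p : ℕ) (g : (Fin n → ℝ) → ℝ) (x : Fin n → ℝ) :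
    gApprox p g x = gApproxQ (p + 1) g x := by
  unfold gApprox gApproxQ
  norm_num

lemma gApproxQ_nonneg {n : ℕ} (q : ℕ) (g : (Fin n → ℝ) → ℝ) (x : Fin n → ℝ) :
    0 ≤ gApproxQ q g x := by
  unfold gApproxQ; split
  · positivity
  · exact le_rfl

lemma fiber_volume {q : ℕ} (hq : q ≠ 0) (r : ℝ) :
    (volume : Measure (Fin q → ℝ)) {y | ∀ j, |y j| ≤ r} = ENNReal.ofReal (2 * r) ^ q := by
  have hset : {y : Fin q → ℝ | ∀ j, |y j| ≤ r} = Set.pi univ (fun _ => Icc (-r) r) := by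
    ext y
    simp only [mem_setOf_eq, Set.mem_pi, mem_univ, forall_true_left, mem_Icc, abs_le]
  rw [hset, volume_pi_pi]
  simp only [Real.volume_Icc, sub_neg_eq_add]
  rw [Finset.prod_const, Finset.card_univ, Fintype.card_fin, two_mul]

lemma projFst_qmp (n q : ℕ) :
    Measure.QuasiMeasurePreserving (projFst : (Fin (n + q) → ℝ) → (Fin n → ℝ))
      volume volume := by
  have hmeas : Measurable (projFst : (Fin (n + q) → ℝ) → (Fin n → ℝ)) :=
    measurable_pi_lambda _ fun i => measurable_pi_apply _
  refine ⟨hmeas, Measure.AbsolutelyContinuous.mk fun s hs h0 => ?_⟩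
  rw [Measure.map_apply hmeas hs]
  have hpre : (splitEquiv n q) ⁻¹' ((projFst : (Fin (n + q) → ℝ) → (Fin n → ℝ)) ⁻¹' s) =
      s ×ˢ (univ : Set (Fin q → ℝ)) := by
    ext ⟨x, y⟩
    simp [projFst_splitEquiv]
  have := (splitEquiv_measurePreserving n q).measure_preimage
    ((hs.preimage hmeas).nullMeasurableSet)
  rw [hpre] at this
  rw [← this]
  rw [Measure.volume_eq_prod, Measure.prod_prod, h0, zero_mul]

lemma nu_smul_KSet {n q : ℕ} (hq : q ≠ 0) {f g : (Fin n → ℝ) → ℝ}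
    (hf : IsEvenLogConcave f) (hg : IsEvenLogConcave g) (u : ℝ) :
    (volume.withDensity fun z : Fin (n + q) → ℝ => ENNReal.ofReal (f (projFst z)))
        (Real.exp (-u) • KSet n q g) =
      ENNReal.ofReal (Real.exp (-(u * (n + q)))) * 2 ^ q *
        ∫⁻ x : Fin n → ℝ, ENNReal.ofReal (f (Real.exp (-u) • x) * gApproxQ q g x) := by
  classical
  set S := Real.exp (-u) • KSet n q g with hS
  have hSnm : NullMeasurableSet S volume :=
    (((KSet_convex hg).smul (Real.exp (-u)))).nullMeasurableSet _
  have hKnm : NullMeasurableSet (KSet n q g) volume :=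
    (KSet_convex hg (q := q)).nullMeasurableSet _
  set G : (Fin (n + q) → ℝ) → ℝ≥0∞ :=
    (KSet n q g).indicator (fun w => ENNReal.ofReal (f (Real.exp (-u) • projFst w))) with hG
  have hGmeas : AEMeasurable G volume := by
    refine AEMeasurable.indicator₀ ?_ hKnm
    exact ENNReal.measurable_ofReal.comp_aemeasurable
      ((elc_aemeasurable hf).comp_quasiMeasurePreserving
        ((Measure.quasiMeasurePreserving_smul volume
          (Real.exp_ne_zero (-u))).comp (projFst_qmp n q)))
  have hpt : ∀ z, S.indicator (fun z => ENNReal.ofReal (f (projFst z))) z =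
      G (Real.exp u • z) := by
    intro z
    have hmem : z ∈ S ↔ Real.exp u • z ∈ KSet n q g := by
      rw [hS, mem_smul_set_iff_inv_smul_mem₀ (Real.exp_ne_zero (-u))]
      rw [Real.exp_neg, inv_inv]
    by_cases hz : z ∈ S
    · rw [indicator_of_mem hz, hG, indicator_of_mem (hmem.1 hz)]
      congr 2
      rw [projFst_smul, smul_smul, ← Real.exp_add]
      simp
    · rw [indicator_of_notMem hz, hG, indicator_of_notMem (fun hc => hz (hmem.2 hc))]
  have step1 : (volume.withDensity fun z : Fin (n + q) → ℝ =>
      ENNReal.ofReal (f (projFst z))) S = ∫⁻ z, G (Real.exp u • z) := by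
    rw [withDensity_apply' _ S, ← lintegral_indicator₀ hSnm]
    exact lintegral_congr hpt
  have hc : Measure.map (Real.exp u • · : (Fin (n + q) → ℝ) → _) volume =
      (ENNReal.ofReal |(Real.exp u ^ Module.finrank ℝ (Fin (n + q) → ℝ))⁻¹|) • volume :=
    Measure.map_addHaar_smul volume (Real.exp_ne_zero u)
  have step2 : ∫⁻ z, G (Real.exp u • z) =
      ENNReal.ofReal (Real.exp (-(u * (n + q)))) * ∫⁻ w, G w := by
    rw [← lintegral_map' (hGmeas.mono' (by rw [hc]; exact Measure.smul_absolutelyContinuous))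
      (measurable_const_smul (Real.exp u)).aemeasurable, hc, lintegral_smul_measure]
    congr 1
    rw [Module.finrank_fin_fun]
    congr 1
    rw [abs_of_pos (by positivity), ← Real.exp_nat_mul, ← Real.exp_neg]
    congr 1
    push_cast
    ring
  have step3 : ∫⁻ w, G w = 2 ^ q *
      ∫⁻ x : Fin n → ℝ, ENNReal.ofReal (f (Real.exp (-u) • x) * gApproxQ q g x) := by
    have hφae : AEMeasurable (fun a : (Fin n → ℝ) × (Fin q → ℝ) => G (splitEquiv n q a))
        (volume.prod volume) := by
      rw [← Measure.volume_eq_prod]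
      exact hGmeas.comp_quasiMeasurePreserving
        (splitEquiv_measurePreserving n q).quasiMeasurePreserving
    rw [← (splitEquiv_measurePreserving n q).lintegral_comp_emb
      (splitEquiv n q).measurableEmbedding G, Measure.volume_eq_prod,
      lintegral_prod (fun a : (Fin n → ℝ) × (Fin q → ℝ) => G (splitEquiv n q a)) hφae]
    have inner : ∀ x : Fin n → ℝ, (∫⁻ y : Fin q → ℝ, G (splitEquiv n q (x, y))) =
        ENNReal.ofReal (f (Real.exp (-u) • x)) * (2 ^ q * ENNReal.ofReal (gApproxQ q g x)) := by
      intro x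
      by_cases hx : 0 < g x
      · set r : ℝ := 1 + Real.log (g x) / q with hr
        have hGxy : ∀ y : Fin q → ℝ, G (splitEquiv n q (x, y)) =
            ENNReal.ofReal (f (Real.exp (-u) • x)) *
              ({y : Fin q → ℝ | ∀ j, |y j| ≤ r}.indicator (fun _ => (1 : ℝ≥0∞)) y) := by
          intro y
          by_cases hy : ∀ j : Fin q, |y j| ≤ r
          · rw [hG, indicator_of_mem ((mem_KSet_split x y).2 ⟨hx, hy⟩),
              indicator_of_mem (by exact hy), projFst_splitEquiv, mul_one]
          · rw [hG, indicator_of_notMem (fun hc => hy ((mem_KSet_split x y).1 hc).2),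
              indicator_of_notMem (by exact hy), mul_zero]
        simp_rw [hGxy]
        rw [lintegral_const_mul' _ _ ENNReal.ofReal_ne_top]
        congr 1
        have hbox : MeasurableSet {y : Fin q → ℝ | ∀ j, |y j| ≤ r} := by
          have : {y : Fin q → ℝ | ∀ j, |y j| ≤ r} = Set.pi univ (fun _ => Icc (-r) r) := by
            ext y
            simp only [mem_setOf_eq, Set.mem_pi, mem_univ, forall_true_left, mem_Icc, abs_le]
          rw [this]
          exact MeasurableSet.univ_pi fun _ => measurableSet_Icc
        rw [lintegral_indicator hbox]
        simp only [lintegral_const, Measure.restrict_apply MeasurableSet.univ, univ_inter,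
          one_mul]
        rw [fiber_volume hq r]
        have hgq : gApproxQ q g x = (max r 0) ^ q := by rw [gApproxQ, if_pos hx]
        rcases le_or_gt 0 r with h0 | h0
        · rw [hgq, max_eq_left h0, ENNReal.ofReal_mul (by norm_num), ENNReal.ofReal_pow h0,
            mul_pow]
          norm_num
        · rw [ENNReal.ofReal_of_nonpos (by linarith), zero_pow hq, hgq, max_eq_right h0.le,
            zero_pow hq, ENNReal.ofReal_zero, mul_zero]
      · have hGxy : ∀ y : Fin q → ℝ, G (splitEquiv n q (x, y)) = 0 := by
          intro y
          rw [hG, indicator_of_notMem (fun hc => hx ((mem_KSet_split x y).1 hc).1)]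
        simp_rw [hGxy]
        rw [lintegral_zero]
        rw [gApproxQ, if_neg hx, ENNReal.ofReal_zero, mul_zero, mul_zero]
    simp_rw [inner]
    have : ∀ x : Fin n → ℝ, ENNReal.ofReal (f (Real.exp (-u) • x)) *
        (2 ^ q * ENNReal.ofReal (gApproxQ q g x)) =
        2 ^ q * ENNReal.ofReal (f (Real.exp (-u) • x) * gApproxQ q g x) := by
      intro x
      rw [ENNReal.ofReal_mul (hf.1 _)]
      ring
    simp_rw [this]
    exact lintegral_const_mul' _ _ (by simp [ENNReal.pow_ne_top])
  rw [step1, step2, step3, mul_assoc]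

lemma elc_projFst {n q : ℕ} {f : (Fin n → ℝ) → ℝ} (hf : IsEvenLogConcave f) :
    IsEvenLogConcave (fun z : Fin (n + q) → ℝ => f (projFst z)) := by
  refine ⟨fun z => hf.1 _, fun z => ?_, fun z w l hl => ?_⟩
  · show f (projFst (-z)) = f (projFst z)
    rw [projFst_neg, hf.2.1]
  · show f (projFst z) ^ (1 - l) * f (projFst w) ^ l ≤ f (projFst ((1 - l) • z + l • w))
    have : projFst ((1 - l) • z + l • w) = (1 - l) • projFst z + l • projFst w := rfl
    rw [this]
    exact hf.2.2 _ _ l hl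

lemma perp_ineq {n q : ℕ} (hq : q ≠ 0) {f g : (Fin n → ℝ) → ℝ}
    (hf : IsEvenLogConcave f) (hg : IsEvenLogConcave g)
    (hB : BProperty (volume.withDensity
      fun z : Fin (n + q) → ℝ => ENNReal.ofReal (f (projFst z))))
    (s t l : ℝ) (hl : l ∈ Set.Icc (0 : ℝ) 1) :
    (∫⁻ x : Fin n → ℝ, ENNReal.ofReal (f (Real.exp (-s) • x) * gApproxQ q g x)).toReal ^ (1 - l) *
      (∫⁻ x : Fin n → ℝ, ENNReal.ofReal (f (Real.exp (-t) • x) * gApproxQ q g x)).toReal ^ l ≤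
    (∫⁻ x : Fin n → ℝ, ENNReal.ofReal
        (f (Real.exp (-((1 - l) * s + l * t)) • x) * gApproxQ q g x)).toReal := by
  obtain ⟨hl0, hl1⟩ := hl
  set m := (1 - l) * s + l * t with hm
  have key := hB (KSet n q g) (KSet_convex hg) (KSet_symm hg) (-s) (-t) l ⟨hl0, hl1⟩
  have harg : (1 - l) * (-s) + l * (-t) = -m := by rw [hm]; ring
  rw [harg, nu_smul_KSet hq hf hg s, nu_smul_KSet hq hf hg t,
    nu_smul_KSet hq hf hg m] at key
  set A := (∫⁻ x : Fin n → ℝ, ENNReal.ofReal (f (Real.exp (-s) • x) * gApproxQ q g x)).toReal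
  set B := (∫⁻ x : Fin n → ℝ, ENNReal.ofReal (f (Real.exp (-t) • x) * gApproxQ q g x)).toReal
  set C := (∫⁻ x : Fin n → ℝ, ENNReal.ofReal (f (Real.exp (-m) • x) * gApproxQ q g x)).toReal
  have hA : 0 ≤ A := ENNReal.toReal_nonneg
  have hB0 : 0 ≤ B := ENNReal.toReal_nonneg
  set D : ℝ → ℝ := fun u => Real.exp (-(u * (n + q))) * 2 ^ q with hD
  have hDpos : ∀ u, 0 < D u := fun u => by positivity
  have htr : ∀ u (J : ℝ≥0∞),
      (ENNReal.ofReal (Real.exp (-(u * (n + q)))) * 2 ^ q * J).toReal = D u * J.toReal := by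
    intro u J
    rw [ENNReal.toReal_mul, ENNReal.toReal_mul, ENNReal.toReal_ofReal (Real.exp_nonneg _),
      ENNReal.toReal_pow, ENNReal.toReal_ofNat]
  rw [htr, htr, htr] at key
  have hDexp : ∀ u, D u = Real.exp (-(u * (n + q)) + q * Real.log 2) := by
    intro u
    rw [hD, Real.exp_add, Real.exp_nat_mul, Real.exp_log (by norm_num : (0:ℝ) < 2)]
  have hDrpow : ∀ u w, D u ^ w = Real.exp ((-(u * (n + q)) + q * Real.log 2) * w) := by
    intro u w
    rw [hDexp, Real.exp_mul]
  have hsplit1 : (D s * A) ^ (1 - l) = D s ^ (1 - l) * A ^ (1 - l) :=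
    Real.mul_rpow (hDpos s).le hA
  have hsplit2 : (D t * B) ^ l = D t ^ l * B ^ l := Real.mul_rpow (hDpos t).le hB0
  rw [hsplit1, hsplit2] at key
  have hDc : D s ^ (1 - l) * D t ^ l = D m := by
    rw [hDrpow, hDrpow, ← Real.exp_add, hDexp]
    congr 1
    rw [hm]
    push_cast
    ring
  have key2 : D m * (A ^ (1 - l) * B ^ l) ≤ D m * C := by
    calc D m * (A ^ (1 - l) * B ^ l) = D s ^ (1 - l) * A ^ (1 - l) * (D t ^ l * B ^ l) := by
          rw [← hDc]; ring
      _ ≤ D m * C := key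
  exact le_of_mul_le_mul_left key2 (hDpos m)

lemma integral_repr {n : ℕ} {f g : (Fin n → ℝ) → ℝ} (hfa : AEMeasurable f volume)
    (hga : AEMeasurable g volume) (hfnn : ∀ x, 0 ≤ f x) (hgnn : ∀ x, 0 ≤ g x) (u : ℝ) :
    ∫ x : Fin n → ℝ, f (Real.exp (-u) • x) * g x =
      (∫⁻ x : Fin n → ℝ, ENNReal.ofReal (f (Real.exp (-u) • x) * g x)).toReal := by
  have hsm : AEStronglyMeasurable (fun x : Fin n → ℝ => f (Real.exp (-u) • x) * g x) volume := by
    refine AEMeasurable.aestronglyMeasurable (AEMeasurable.mul ?_ hga)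
    exact hfa.comp_quasiMeasurePreserving
      (Measure.quasiMeasurePreserving_smul volume (Real.exp_ne_zero (-u)))
  rw [integral_eq_lintegral_of_nonneg_ae
    (Filter.Eventually.of_forall fun x => mul_nonneg (hfnn _) (hgnn _)) hsm]

lemma J_tendsto {n : ℕ} {f g : (Fin n → ℝ) → ℝ} (hfa : AEMeasurable f volume)
    (hga : AEMeasurable g volume) (hfnn : ∀ x, 0 ≤ f x) (hgnn : ∀ x, 0 ≤ g x) (u : ℝ) :
    Filter.Tendsto (fun p : ℕ => ∫⁻ x : Fin n → ℝ,
        ENNReal.ofReal (f (Real.exp (-u) • x) * gApprox p g x)) Filter.atTop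
      (nhds (∫⁻ x : Fin n → ℝ, ENNReal.ofReal (f (Real.exp (-u) • x) * g x))) := by
  have hmeas : ∀ p : ℕ, AEMeasurable
      (fun x : Fin n → ℝ => ENNReal.ofReal (f (Real.exp (-u) • x) * gApprox p g x)) volume := by
    intro p
    refine ENNReal.measurable_ofReal.comp_aemeasurable
      (AEMeasurable.mul ?_ (gApprox_aemeasurable hga p))
    exact hfa.comp_quasiMeasurePreserving
      (Measure.quasiMeasurePreserving_smul volume (Real.exp_ne_zero (-u)))
  have hmono : ∀ x : Fin n → ℝ, Monotone fun p : ℕ =>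
      ENNReal.ofReal (f (Real.exp (-u) • x) * gApprox p g x) := by
    intro x p1 p2 hp
    exact ENNReal.ofReal_le_ofReal
      (mul_le_mul_of_nonneg_left (gApprox_mono g x hp) (hfnn _))
  have hsup : ∀ x : Fin n → ℝ,
      (⨆ p : ℕ, ENNReal.ofReal (f (Real.exp (-u) • x) * gApprox p g x))
        = ENNReal.ofReal (f (Real.exp (-u) • x) * g x) := by
    intro x
    have hlim : Filter.Tendsto
        (fun p : ℕ => ENNReal.ofReal (f (Real.exp (-u) • x) * gApprox p g x))
        Filter.atTop (nhds (ENNReal.ofReal (f (Real.exp (-u) • x) * g x))) :=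
      ENNReal.tendsto_ofReal (Filter.Tendsto.const_mul _ (gApprox_tendsto g x (hgnn x)))
    exact tendsto_nhds_unique (tendsto_atTop_iSup (hmono x)) hlim
  have hJmono : Monotone fun p : ℕ => ∫⁻ x : Fin n → ℝ,
      ENNReal.ofReal (f (Real.exp (-u) • x) * gApprox p g x) :=
    fun p1 p2 hp => lintegral_mono fun x => hmono x hp
  have hkey := lintegral_iSup' hmeas (Filter.Eventually.of_forall hmono)
  have h2 : (⨆ p : ℕ, ∫⁻ x : Fin n → ℝ,
      ENNReal.ofReal (f (Real.exp (-u) • x) * gApprox p g x))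
        = ∫⁻ x : Fin n → ℝ, ENNReal.ofReal (f (Real.exp (-u) • x) * g x) := by
    rw [← hkey]
    exact lintegral_congr hsup
  have := tendsto_atTop_iSup hJmono
  rwa [h2] at this

lemma main_ineq {n : ℕ}
    (hB : ∀ N : ℕ, 0 < N → ∀ F : (Fin N → ℝ) → ℝ, IsEvenLogConcave F →
      BProperty (volume.withDensity fun x => ENNReal.ofReal (F x)))
    {f g : (Fin n → ℝ) → ℝ} (hf : IsEvenLogConcave f) (hg : IsEvenLogConcave g)
    (s t l : ℝ) (hl : l ∈ Set.Icc (0 : ℝ) 1) :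
    (∫⁻ x : Fin n → ℝ, ENNReal.ofReal (f (Real.exp (-s) • x) * g x)).toReal ^ (1 - l) *
      (∫⁻ x : Fin n → ℝ, ENNReal.ofReal (f (Real.exp (-t) • x) * g x)).toReal ^ l ≤
    (∫⁻ x : Fin n → ℝ,
        ENNReal.ofReal (f (Real.exp (-((1 - l) * s + l * t)) • x) * g x)).toReal := by
  obtain ⟨hl0, hl1⟩ := hl
  have hfa := elc_aemeasurable hf
  have hga := elc_aemeasurable hg
  set J : ℝ → ℝ≥0∞ :=
    fun u => ∫⁻ x : Fin n → ℝ, ENNReal.ofReal (f (Real.exp (-u) • x) * g x) with hJdef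
  show (J s).toReal ^ (1 - l) * (J t).toReal ^ l ≤ (J ((1 - l) * s + l * t)).toReal
  rcases eq_or_ne l 0 with rfl | hlne0
  · have hm : (1 - 0) * s + 0 * t = s := by ring
    rw [hm, Real.rpow_zero, sub_zero, Real.rpow_one, mul_one]
  rcases eq_or_ne l 1 with rfl | hlne1
  · have hm : (1 - 1) * s + 1 * t = t := by ring
    rw [hm, sub_self, Real.rpow_zero, Real.rpow_one, one_mul]
  have hl0' : 0 < l := lt_of_le_of_ne hl0 (Ne.symm hlne0)
  have hl1' : l < 1 := lt_of_le_of_ne hl1 hlne1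
  by_cases hJs : J s = ⊤
  · rw [hJs, ENNReal.toReal_top, Real.zero_rpow (sub_ne_zero.2 (Ne.symm hlne1)), zero_mul]
    exact ENNReal.toReal_nonneg
  by_cases hJt : J t = ⊤
  · rw [hJt, ENNReal.toReal_top, Real.zero_rpow (ne_of_gt hl0'), mul_zero]
    exact ENNReal.toReal_nonneg
  set m := (1 - l) * s + l * t with hm
  have hJmono : Monotone J := by
    intro u v huv
    refine lintegral_mono fun x => ENNReal.ofReal_le_ofReal ?_
    refine mul_le_mul_of_nonneg_right ?_ (hg.1 x)
    exact elc_smul_le hf (Real.exp_pos (-v)) (Real.exp_le_exp.2 (neg_le_neg huv)) x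
  have hJm : J m ≠ ⊤ := by
    rcases le_total s t with hst | hst
    · have hmt : m ≤ t := by rw [hm]; nlinarith
      exact fun h => hJt (top_le_iff.1 (h ▸ hJmono hmt))
    · have hms : m ≤ s := by rw [hm]; nlinarith
      exact fun h => hJs (top_le_iff.1 (h ▸ hJmono hms))
  set Jp : ℕ → ℝ → ℝ≥0∞ := fun p u => ∫⁻ x : Fin n → ℝ,
    ENNReal.ofReal (f (Real.exp (-u) • x) * gApprox p g x) with hJp
  have hperp : ∀ p : ℕ,
      (Jp p s).toReal ^ (1 - l) * (Jp p t).toReal ^ l ≤ (Jp p m).toReal := by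
    intro p
    have hconv : ∀ u : ℝ, Jp p u = ∫⁻ x : Fin n → ℝ,
        ENNReal.ofReal (f (Real.exp (-u) • x) * gApproxQ (p + 1) g x) := by
      intro u
      refine lintegral_congr fun x => ?_
      rw [gApprox_eq_gApproxQ]
    rw [hconv s, hconv t, hconv m]
    exact perp_ineq (Nat.succ_ne_zero p) hf hg
      (hB (n + (p + 1)) (by positivity) _ (elc_projFst hf)) s t l ⟨hl0, hl1⟩
  have hJple : ∀ (p : ℕ) (u : ℝ), Jp p u ≤ J u := by
    intro p u
    refine lintegral_mono fun x => ENNReal.ofReal_le_ofReal ?_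
    exact mul_le_mul_of_nonneg_left (gApprox_le p g x (hg.1 x)) (hf.1 _)
  have htends : Filter.Tendsto (fun p => (Jp p s).toReal) Filter.atTop (nhds (J s).toReal) :=
    (ENNReal.tendsto_toReal hJs).comp (J_tendsto hfa hga hf.1 hg.1 s)
  have htendt : Filter.Tendsto (fun p => (Jp p t).toReal) Filter.atTop (nhds (J t).toReal) :=
    (ENNReal.tendsto_toReal hJt).comp (J_tendsto hfa hga hf.1 hg.1 t)
  have hLHS : Filter.Tendsto (fun p => (Jp p s).toReal ^ (1 - l) * (Jp p t).toReal ^ l)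
      Filter.atTop (nhds ((J s).toReal ^ (1 - l) * (J t).toReal ^ l)) :=
    (htends.rpow_const (Or.inr (by linarith))).mul (htendt.rpow_const (Or.inr hl0))
  refine le_of_tendsto hLHS (Filter.Eventually.of_forall fun p => ?_)
  exact le_trans (hperp p) (ENNReal.toReal_mono hJm (hJple p m))

theorem BConjecture_iff_functional_version_aux :
    (∀ n : ℕ, 0 < n → ∀ f : (Fin n → ℝ) → ℝ, IsEvenLogConcave f →
      BProperty (volume.withDensity (fun x => ENNReal.ofReal (f x)))) ↔
    (∀ n : ℕ, 0 < n → ∀ f g : (Fin n → ℝ) → ℝ,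
      IsEvenLogConcave f → IsEvenLogConcave g →
      ∀ s t : ℝ, ∀ l ∈ Set.Icc (0 : ℝ) 1,
        (∫ x, f (Real.exp (-s) • x) * g x) ^ (1 - l) *
            (∫ x, f (Real.exp (-t) • x) * g x) ^ l ≤
          ∫ x, f (Real.exp (-((1 - l) * s + l * t)) • x) * g x) := by
  constructor
  · intro hB n hn f g hf hg s t l hl
    have hfa := elc_aemeasurable hf
    have hga := elc_aemeasurable hg
    rw [integral_repr hfa hga hf.1 hg.1 s, integral_repr hfa hga hf.1 hg.1 t,
      integral_repr hfa hga hf.1 hg.1 ((1 - l) * s + l * t)]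
    exact main_ineq hB hf hg s t l hl
  · intro hfunc n hn f hf A hconv hsym s t l hl
    have key := hfunc n hn (A.indicator fun _ => (1 : ℝ)) f
      (elc_indicator hconv hsym) hf s t l hl
    rw [indicator_integral_repr hf hconv s, indicator_integral_repr hf hconv t,
      indicator_integral_repr hf hconv ((1 - l) * s + l * t)] at key
    exact key


theorem BConjecture_iff_functional_version :
    (∀ n : ℕ, 0 < n → ∀ f : (Fin n → ℝ) → ℝ, IsEvenLogConcave f →
      BProperty (volume.withDensity (fun x => ENNReal.ofReal (f x)))) ↔
    (∀ n : ℕ, 0 < n → ∀ f g : (Fin n → ℝ) → ℝ,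
      IsEvenLogConcave f → IsEvenLogConcave g →
      ∀ s t : ℝ, ∀ l ∈ Set.Icc (0 : ℝ) 1,
        (∫ x, f (Real.exp (-s) • x) * g x) ^ (1 - l) *
            (∫ x, f (Real.exp (-t) • x) * g x) ^ l ≤
          ∫ x, f (Real.exp (-((1 - l) * s + l * t)) • x) * g x) :=
  BConjecture_iff_functional_version_aux
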